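/- Let κ = 1 + √2. For every ζ* ∈ ℝ define α_i = ζ* − iπ/2 and D_i = √(2κ(√2 + cos α_i)) for i = 0, 1, 2, 3 (note √2 + cos α_i > 0, so D_i > 0), and define ω = √(κ/2) · [ sin ζ*/√(√2 + cos ζ*) − cos ζ*/√(√2 + sin ζ*) − sin ζ*/√(√2 − cos ζ*) + cos ζ*/√(√2 − sin ζ*) ]. Then there exist θ0, θ1, θ2, θ3 ∈ ℝ with cos θ_i = (κ + cos α_i)/D_i and sin θ_i = sin α_i/D_i for each i, and for any such θ0, θ1, θ2, θ3 the point (θ0, θ1, θ2, θ3, ζ*) is an equilibrium of the minimal frequency-spiral model with parameter ω. (This yields a one-parameter family of equilibria whose ω–ζ relation is exactly ω·√(2/κ) = sin ζ/(√2 + cos ζ)^{1/2} − cos ζ/(√2 + sin ζ)^{1/2} − sin ζ/(√2 − cos ζ)^{1/2} + cos ζ/(√2 − sin ζ)^{1/2}.) -/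

import Mathlib

open Real

/-- An equilibrium of the minimal frequency-spiral model with parameter `ω` and
`κ = 1 + √2`: all five right-hand sides of the ODE system vanish. -/
def IsMinimalSpiralEquilibrium (ω θ0 θ1 θ2 θ3 ζ : ℝ) : Prop :=
  Real.sin (ζ - θ0) - (1 + Real.sqrt 2) * Real.sin θ0 = 0 ∧
  Real.sin (ζ - θ1 - Real.pi / 2) - (1 + Real.sqrt 2) * Real.sin θ1 = 0 ∧
  Real.sin (ζ - θ2 - Real.pi) - (1 + Real.sqrt 2) * Real.sin θ2 = 0 ∧
  Real.sin (ζ - θ3 - 3 * Real.pi / 2) - (1 + Real.sqrt 2) * Real.sin θ3 = 0 ∧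
  ω - Real.sin (ζ - θ0) - Real.sin (ζ - θ1 - Real.pi / 2)
    - Real.sin (ζ - θ2 - Real.pi) - Real.sin (ζ - θ3 - 3 * Real.pi / 2) = 0

lemma exists_cos_sin {x y : ℝ} (h : x^2 + y^2 = 1) :
    ∃ θ : ℝ, Real.cos θ = x ∧ Real.sin θ = y := by
  have hz : (⟨x, y⟩ : ℂ) ≠ 0 := by
    intro h0
    rw [Complex.ext_iff] at h0
    simp only [Complex.zero_re, Complex.zero_im] at h0
    nlinarith [h0.1, h0.2]
  have habs : ‖(⟨x, y⟩ : ℂ)‖ = 1 := by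
    rw [Complex.norm_def, Complex.normSq_mk]
    rw [show x * x + y * y = 1 by nlinarith]
    exact Real.sqrt_one
  refine ⟨Complex.arg ⟨x, y⟩, ?_, ?_⟩
  · rw [Complex.cos_arg hz, habs]; simp
  · rw [Complex.sin_arg, habs]; simp

lemma sqrt2_gt_one : (1:ℝ) < Real.sqrt 2 := by
  nlinarith [Real.sq_sqrt (by norm_num : (0:ℝ) ≤ 2), Real.sqrt_nonneg 2]

lemma kpos : (0:ℝ) < 1 + Real.sqrt 2 := by nlinarith [sqrt2_gt_one]

lemma spos (α : ℝ) : (0:ℝ) < Real.sqrt 2 + Real.cos α := by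
  nlinarith [Real.neg_one_le_cos α, sqrt2_gt_one]

lemma Dsq (α : ℝ) :
    Real.sqrt (2 * (1 + Real.sqrt 2) * (Real.sqrt 2 + Real.cos α)) ^ 2
      = 2 * (1 + Real.sqrt 2) * (Real.sqrt 2 + Real.cos α) := by
  apply Real.sq_sqrt
  have := spos α; have := kpos; positivity

lemma Dpos (α : ℝ) :
    0 < Real.sqrt (2 * (1 + Real.sqrt 2) * (Real.sqrt 2 + Real.cos α)) := by
  apply Real.sqrt_pos.mpr
  have := spos α; have := kpos; positivity

lemma num_id (α : ℝ) :
    ((1 + Real.sqrt 2) + Real.cos α)^2 + (Real.sin α)^2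
      = 2 * (1 + Real.sqrt 2) * (Real.sqrt 2 + Real.cos α) := by
  have h2 : Real.sqrt 2 ^ 2 = 2 := Real.sq_sqrt (by norm_num)
  nlinarith [Real.sin_sq_add_cos_sq α]

lemma key_ex (α : ℝ) :
    ∃ θ : ℝ, Real.cos θ = ((1 + Real.sqrt 2) + Real.cos α) /
        Real.sqrt (2 * (1 + Real.sqrt 2) * (Real.sqrt 2 + Real.cos α)) ∧
      Real.sin θ = Real.sin α /
        Real.sqrt (2 * (1 + Real.sqrt 2) * (Real.sqrt 2 + Real.cos α)) := by
  apply exists_cos_sin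
  have hD := Dpos α
  rw [div_pow, div_pow, ← add_div, num_id α, Dsq α]
  have := spos α; have := kpos
  exact div_self (by positivity)

lemma sqrt_half_mul : Real.sqrt ((1 + Real.sqrt 2)/2) * Real.sqrt (2 * (1 + Real.sqrt 2))
    = 1 + Real.sqrt 2 := by
  rw [← Real.sqrt_mul (by positivity : (0:ℝ) ≤ (1 + Real.sqrt 2)/2)]
  rw [show (1 + Real.sqrt 2)/2 * (2 * (1 + Real.sqrt 2)) = (1 + Real.sqrt 2)^2 by ring]
  exact Real.sqrt_sq kpos.le

lemma key (α θ : ℝ)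
    (hc : Real.cos θ = ((1 + Real.sqrt 2) + Real.cos α) /
        Real.sqrt (2 * (1 + Real.sqrt 2) * (Real.sqrt 2 + Real.cos α)))
    (hs : Real.sin θ = Real.sin α /
        Real.sqrt (2 * (1 + Real.sqrt 2) * (Real.sqrt 2 + Real.cos α))) :
    Real.sin (α - θ) - (1 + Real.sqrt 2) * Real.sin θ = 0 ∧
    Real.sin (α - θ) = Real.sqrt ((1 + Real.sqrt 2)/2) *
      (Real.sin α / Real.sqrt (Real.sqrt 2 + Real.cos α)) := by
  have hD := Dpos α
  have hsplit : Real.sqrt (2 * (1 + Real.sqrt 2) * (Real.sqrt 2 + Real.cos α))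
      = Real.sqrt (2 * (1 + Real.sqrt 2)) * Real.sqrt (Real.sqrt 2 + Real.cos α) :=
    Real.sqrt_mul (by positivity) _
  have hval : Real.sin (α - θ) = (1 + Real.sqrt 2) * Real.sin α /
      Real.sqrt (2 * (1 + Real.sqrt 2) * (Real.sqrt 2 + Real.cos α)) := by
    rw [Real.sin_sub, hc, hs]
    field_simp
    ring
  constructor
  · rw [hval, hs]; field_simp; ring
  · rw [hval, hsplit]
    have h1 : 0 < Real.sqrt (2 * (1 + Real.sqrt 2)) := by
      apply Real.sqrt_pos.mpr; have := kpos; positivity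
    have h2 : 0 < Real.sqrt (Real.sqrt 2 + Real.cos α) :=
      Real.sqrt_pos.mpr (spos α)
    rw [div_eq_iff (by positivity), mul_mul_mul_comm, div_mul_cancel₀ _ h2.ne',
      sqrt_half_mul]

/-- For every `ζ* ∈ ℝ`, with `κ = 1 + √2`, `α_i = ζ* − iπ/2`,
`D_i = √(2κ(√2 + cos α_i)) > 0`, and
`ω = √(κ/2)·[sin ζ*/√(√2+cos ζ*) − cos ζ*/√(√2+sin ζ*) − sin ζ*/√(√2−cos ζ*)
 + cos ζ*/√(√2−sin ζ*)]`, there exist `θ0, θ1, θ2, θ3` with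
`cos θ_i = (κ + cos α_i)/D_i` and `sin θ_i = sin α_i/D_i`, and any such
`(θ0, θ1, θ2, θ3, ζ*)` is an equilibrium of the minimal frequency-spiral model with
parameter `ω`. -/
theorem minimalSpiral_equilibrium_family (ζ : ℝ) :
    let κ : ℝ := 1 + Real.sqrt 2
    let α : ℕ → ℝ := fun i => ζ - (i : ℝ) * (Real.pi / 2)
    let D : ℕ → ℝ := fun i => Real.sqrt (2 * κ * (Real.sqrt 2 + Real.cos (α i)))
    let ω : ℝ := Real.sqrt (κ / 2) *
      (Real.sin ζ / Real.sqrt (Real.sqrt 2 + Real.cos ζ)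
        - Real.cos ζ / Real.sqrt (Real.sqrt 2 + Real.sin ζ)
        - Real.sin ζ / Real.sqrt (Real.sqrt 2 - Real.cos ζ)
        + Real.cos ζ / Real.sqrt (Real.sqrt 2 - Real.sin ζ))
    (∃ θ0 θ1 θ2 θ3 : ℝ,
      (Real.cos θ0 = (κ + Real.cos (α 0)) / D 0 ∧ Real.sin θ0 = Real.sin (α 0) / D 0) ∧
      (Real.cos θ1 = (κ + Real.cos (α 1)) / D 1 ∧ Real.sin θ1 = Real.sin (α 1) / D 1) ∧
      (Real.cos θ2 = (κ + Real.cos (α 2)) / D 2 ∧ Real.sin θ2 = Real.sin (α 2) / D 2) ∧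
      (Real.cos θ3 = (κ + Real.cos (α 3)) / D 3 ∧ Real.sin θ3 = Real.sin (α 3) / D 3)) ∧
    ∀ θ0 θ1 θ2 θ3 : ℝ,
      (Real.cos θ0 = (κ + Real.cos (α 0)) / D 0 ∧ Real.sin θ0 = Real.sin (α 0) / D 0) →
      (Real.cos θ1 = (κ + Real.cos (α 1)) / D 1 ∧ Real.sin θ1 = Real.sin (α 1) / D 1) →
      (Real.cos θ2 = (κ + Real.cos (α 2)) / D 2 ∧ Real.sin θ2 = Real.sin (α 2) / D 2) →
      (Real.cos θ3 = (κ + Real.cos (α 3)) / D 3 ∧ Real.sin θ3 = Real.sin (α 3) / D 3) →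
      IsMinimalSpiralEquilibrium ω θ0 θ1 θ2 θ3 ζ := by
  intro κ α D ω
  have hα0 : α 0 = ζ := by simp [α]
  have hα1 : α 1 = ζ - Real.pi / 2 := by simp [α]
  have hα2 : α 2 = ζ - Real.pi := by simp [α]; ring
  have hα3 : α 3 = ζ - 3 * Real.pi / 2 := by simp [α]; ring
  have hD : ∀ i, D i = Real.sqrt (2 * (1 + Real.sqrt 2) * (Real.sqrt 2 + Real.cos (α i))) :=
    fun i => rfl
  constructor
  · obtain ⟨t0, h0⟩ := key_ex (α 0)
    obtain ⟨t1, h1⟩ := key_ex (α 1)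
    obtain ⟨t2, h2⟩ := key_ex (α 2)
    obtain ⟨t3, h3⟩ := key_ex (α 3)
    exact ⟨t0, t1, t2, t3, h0, h1, h2, h3⟩
  · intro θ0 θ1 θ2 θ3 h0 h1 h2 h3
    rw [hD 0] at h0; rw [hD 1] at h1; rw [hD 2] at h2; rw [hD 3] at h3
    obtain ⟨e0, f0⟩ := key (α 0) θ0 h0.1 h0.2
    obtain ⟨e1, f1⟩ := key (α 1) θ1 h1.1 h1.2
    obtain ⟨e2, f2⟩ := key (α 2) θ2 h2.1 h2.2
    obtain ⟨e3, f3⟩ := key (α 3) θ3 h3.1 h3.2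
    rw [hα0] at e0 f0; rw [hα1] at e1 f1; rw [hα2] at e2 f2; rw [hα3] at e3 f3
    have r1 : ζ - θ1 - Real.pi / 2 = ζ - Real.pi / 2 - θ1 := by ring
    have r2 : ζ - θ2 - Real.pi = ζ - Real.pi - θ2 := by ring
    have r3 : ζ - θ3 - 3 * Real.pi / 2 = ζ - 3 * Real.pi / 2 - θ3 := by ring
    have sc1 : Real.sin (ζ - Real.pi / 2) = -Real.cos ζ := by
      rw [Real.sin_sub]; simp
    have cc1 : Real.cos (ζ - Real.pi / 2) = Real.sin ζ := by
      rw [Real.cos_sub]; simp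
    have sc2 : Real.sin (ζ - Real.pi) = -Real.sin ζ := by
      rw [Real.sin_sub]; simp
    have cc2 : Real.cos (ζ - Real.pi) = -Real.cos ζ := by
      rw [Real.cos_sub]; simp
    have s32 : Real.sin (3 * Real.pi / 2) = -1 := by
      rw [show 3 * Real.pi / 2 = Real.pi + Real.pi / 2 by ring, Real.sin_add]; simp
    have c32 : Real.cos (3 * Real.pi / 2) = 0 := by
      rw [show 3 * Real.pi / 2 = Real.pi + Real.pi / 2 by ring, Real.cos_add]; simp
    have sc3 : Real.sin (ζ - 3 * Real.pi / 2) = Real.cos ζ := by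
      rw [Real.sin_sub, s32, c32]; ring
    have cc3 : Real.cos (ζ - 3 * Real.pi / 2) = -Real.sin ζ := by
      rw [Real.cos_sub, s32, c32]; ring
    rw [sc1, cc1] at f1
    rw [sc2, cc2] at f2
    rw [sc3, cc3] at f3
    refine ⟨e0, by rw [r1]; exact e1, by rw [r2]; exact e2, by rw [r3]; exact e3, ?_⟩
    rw [r1, r2, r3, f0, f1, f2, f3]
    show Real.sqrt ((1 + Real.sqrt 2) / 2) * _ - _ - _ - _ - _ = 0
    rw [show Real.sqrt 2 + -Real.cos ζ = Real.sqrt 2 - Real.cos ζ by ring,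
      show Real.sqrt 2 + -Real.sin ζ = Real.sqrt 2 - Real.sin ζ by ring]
    ring
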